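/- Suppose F : [0,∞) → [0,∞) is continuous, α(t) = ∫₀^{F(t)} 1/(1+√s) ds is differentiable with α'(t) ≤ C·F(t) for all t ≥ 0, and ∫₀^∞ F(s) ds ≤ K < ∞. Then F(t) ≤ max(2(α(0) + CK), 4(α(0) + CK)²) for all t ≥ 0; in particular F is uniformly bounded. -/

import Mathlib

open MeasureTheory intervalIntegral

noncomputable def ig : ℝ → ℝ := fun s => 1 / (1 + Real.sqrt s)

lemma ig_cont : Continuous ig := by
  apply Continuous.div continuous_const
  · exact continuous_const.add Real.continuous_sqrt
  · intro x; positivity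

lemma ig_nonneg (s : ℝ) : 0 ≤ ig s := by
  unfold ig; positivity

lemma phi_lb_small {x : ℝ} (h0 : 0 ≤ x) (h1 : x ≤ 1) :
    x / 2 ≤ ∫ s in (0:ℝ)..x, ig s := by
  have : ∫ s in (0:ℝ)..x, (1/2 : ℝ) ≤ ∫ s in (0:ℝ)..x, ig s := by
    apply intervalIntegral.integral_mono_on h0 (intervalIntegrable_const)
      (ig_cont.intervalIntegrable 0 x)
    intro s hs
    rw [Set.mem_Icc] at hs
    unfold ig
    rw [div_le_div_iff₀ (by norm_num) (by positivity)]
    have : Real.sqrt s ≤ 1 := by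
      rw [show (1:ℝ) = Real.sqrt 1 by simp]
      exact Real.sqrt_le_sqrt (hs.2.trans h1)
    linarith
  simpa [div_eq_mul_inv, mul_comm] using this

lemma phi_lb_big {x : ℝ} (h1 : 1 ≤ x) :
    Real.sqrt x / 2 ≤ ∫ s in (0:ℝ)..x, ig s := by
  have hx0 : (0:ℝ) ≤ x := by linarith
  have hsx : 1 ≤ Real.sqrt x := by
    rw [show (1:ℝ) = Real.sqrt 1 by simp]; exact Real.sqrt_le_sqrt h1
  have h : ∫ s in (0:ℝ)..x, (1/(2*Real.sqrt x) : ℝ) ≤ ∫ s in (0:ℝ)..x, ig s := by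
    apply intervalIntegral.integral_mono_on hx0 (intervalIntegrable_const)
      (ig_cont.intervalIntegrable 0 x)
    intro s hs
    rw [Set.mem_Icc] at hs
    unfold ig
    rw [div_le_div_iff₀ (by positivity) (by positivity)]
    have : Real.sqrt s ≤ Real.sqrt x := Real.sqrt_le_sqrt hs.2
    linarith
  rw [intervalIntegral.integral_const, smul_eq_mul, sub_zero] at h
  have hs0 : 0 < Real.sqrt x := by linarith
  calc Real.sqrt x / 2 = x * (1/(2*Real.sqrt x)) := by
        field_simp
        exact Real.sq_sqrt hx0
      _ ≤ _ := h

theorem F_uniformly_bounded (F α : ℝ → ℝ) (C K : ℝ)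
    (hC : 0 ≤ C) (hK : 0 ≤ K)
    (hFcont : Continuous F) (hFnonneg : ∀ t, 0 ≤ t → 0 ≤ F t)
    (hα : ∀ t, α t = ∫ s in (0:ℝ)..(F t), 1 / (1 + Real.sqrt s))
    (hαdiff : ∀ t, 0 ≤ t → DifferentiableAt ℝ α t)
    (hαderiv : ∀ t, 0 ≤ t → deriv α t ≤ C * F t)
    (hFint : MeasureTheory.IntegrableOn F (Set.Ici 0))
    (hFtotal : ∫ s in Set.Ici (0:ℝ), F s ≤ K) :
    ∀ t, 0 ≤ t → F t ≤ max (2 * (α 0 + C * K)) (4 * (α 0 + C * K) ^ 2) := by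
  have hCF : Continuous (fun s => C * F s) := continuous_const.mul hFcont
  set P : ℝ → ℝ := fun t => ∫ s in (0:ℝ)..t, C * F s with hP
  have hPcont : Continuous P :=
    intervalIntegral.continuous_primitive (fun a b => hCF.intervalIntegrable a b) 0
  have hPderiv : ∀ t : ℝ, HasDerivAt P (C * F t) t := fun t =>
    intervalIntegral.integral_hasDerivAt_right (hCF.intervalIntegrable 0 t)
      hCF.aestronglyMeasurable.stronglyMeasurableAtFilter hCF.continuousAt
  have hαcont : Continuous α := by
    have : α = (fun x => ∫ s in (0:ℝ)..x, ig s) ∘ F := funext fun t => hα t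
    rw [this]
    exact (intervalIntegral.continuous_primitive
      (fun a b => ig_cont.intervalIntegrable a b) 0).comp hFcont
  -- Gronwall: α t ≤ α 0 + P t for t ≥ 0
  have hmono : MonotoneOn (fun t => P t - α t) (Set.Ici 0) := by
    apply monotoneOn_of_deriv_nonneg (convex_Ici 0)
      ((hPcont.sub hαcont).continuousOn)
    · intro x hx
      rw [interior_Ici] at hx
      exact ((hPderiv x).differentiableAt.sub (hαdiff x hx.le)).differentiableWithinAt
    · intro x hx
      rw [interior_Ici] at hx
      rw [deriv_sub (hPderiv x).differentiableAt (hαdiff x hx.le), (hPderiv x).deriv]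
      have := hαderiv x hx.le
      linarith
  intro t ht
  have hg : P 0 - α 0 ≤ P t - α t := hmono Set.self_mem_Ici ht ht
  have hP0 : P 0 = 0 := intervalIntegral.integral_same
  -- P t ≤ C * K
  have hPt : P t ≤ C * K := by
    have h1 : P t = C * ∫ s in (0:ℝ)..t, F s := by
      rw [hP]; exact intervalIntegral.integral_const_mul C F
    have h2 : ∫ s in (0:ℝ)..t, F s ≤ ∫ s in Set.Ici (0:ℝ), F s := by
      rw [intervalIntegral.integral_of_le ht]
      apply MeasureTheory.setIntegral_mono_set hFint
      · filter_upwards [MeasureTheory.ae_restrict_mem measurableSet_Ici] with s hs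
        exact hFnonneg s hs
      · exact Filter.Eventually.of_forall fun s hs => le_of_lt hs.1
    rw [h1]
    exact mul_le_mul_of_nonneg_left (h2.trans hFtotal) hC
  have hαt : α t ≤ α 0 + C * K := by linarith [hg, hP0, hPt]
  have hφ : α t = ∫ s in (0:ℝ)..(F t), ig s := hα t
  have hF0 : 0 ≤ F t := hFnonneg t ht
  by_cases hle : F t ≤ 1
  · apply le_max_of_le_left
    have := phi_lb_small hF0 hle
    rw [← hφ] at this
    linarith
  · apply le_max_of_le_right
    push_neg at hle
    have hlb := phi_lb_big hle.le
    rw [← hφ] at hlb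
    have hs : Real.sqrt (F t) ≤ 2 * (α 0 + C * K) := by linarith
    have h2 : F t = Real.sqrt (F t) * Real.sqrt (F t) := (Real.mul_self_sqrt hF0).symm
    have hs0 : 0 ≤ Real.sqrt (F t) := Real.sqrt_nonneg _
    nlinarith
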